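/- Let c₁ ∈ (0, 1), c₂ ∈ (0, 1/10), c₃ ∈ (0, 1) be constants. Let H be a d×d complex Hermitian matrix with 0 ⪯ H ⪯ I whose smallest eigenvalue is g, and let ε > 0 satisfy g ≤ c₁ε. Let Π_{g+ε} be the spectral projector of H onto eigenvalues at most g + ε, and let σ be a d×d density matrix with tr(Π_{g+ε} σ) ≥ c₂. Set β = 3·ln(1+c₂)/(c₃ε), c₄ = e^{−6(1+c₁)ln(1+c₂)/c₃}·c₂/2, γ = c₃c₄/40, and σ(β) = e^{−βH} σ e^{−βH}. Then tr(σ(β)) − 4γ ≥ c₄. -/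

import Mathlib

open Matrix
open scoped ComplexOrder

/-- The matrix exponential of a complex square matrix. -/
noncomputable def mexp {d : ℕ} (A : Matrix (Fin d) (Fin d) ℂ) : Matrix (Fin d) (Fin d) ℂ :=
  NormedSpace.exp A

/-- The spectral projector of a Hermitian matrix onto the span of its eigenvectors
with eigenvalue at most `E`. -/
noncomputable def spectralProj {d : ℕ} {H : Matrix (Fin d) (Fin d) ℂ}
    (hH : H.IsHermitian) (E : ℝ) : Matrix (Fin d) (Fin d) ℂ :=
  (hH.eigenvectorUnitary : Matrix (Fin d) (Fin d) ℂ) *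
    Matrix.diagonal (fun i => if hH.eigenvalues i ≤ E then (1 : ℂ) else 0) *
    star (hH.eigenvectorUnitary : Matrix (Fin d) (Fin d) ℂ)

/-- Conjugated-diagonal trace formula. -/
lemma qal_conj_trace {d : ℕ} (U : Matrix (Fin d) (Fin d) ℂ)
    (σ : Matrix (Fin d) (Fin d) ℂ) (f : Fin d → ℂ) :
    ((U * diagonal f * star U) * σ).trace = ∑ i, f i * (star U * σ * U) i i := by
  calc ((U * diagonal f * star U) * σ).trace
      = ((U * diagonal f) * (star U * σ)).trace := by rw [mul_assoc]
    _ = ((star U * σ) * (U * diagonal f)).trace := trace_mul_comm _ _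
    _ = ((star U * σ * U) * diagonal f).trace := by simp only [mul_assoc]
    _ = (diagonal f * (star U * σ * U)).trace := trace_mul_comm _ _
    _ = ∑ i, f i * (star U * σ * U) i i := by
        simp [Matrix.trace, Matrix.diag, Matrix.diagonal_mul]

/-- Diagonal entries of a PSD matrix have nonnegative real part. -/
lemma qal_psd_diag_re_nonneg {d : ℕ} {M : Matrix (Fin d) (Fin d) ℂ}
    (hM : M.PosSemidef) (i : Fin d) : 0 ≤ (M i i).re := by
  have h := Complex.le_def.mp (hM.diag_nonneg (i := i))
  exact h.1

/-- Diagonalization of the matrix exponential of `-(β • H)` for Hermitian `H`. -/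
lemma qal_mexp_eq {d : ℕ} (H : Matrix (Fin d) (Fin d) ℂ) (hH : H.IsHermitian) (β : ℝ) :
    mexp (-((β : ℂ) • H)) =
      (hH.eigenvectorUnitary : Matrix (Fin d) (Fin d) ℂ) *
        diagonal (fun i => (Real.exp (-(β * hH.eigenvalues i)) : ℂ)) *
        star (hH.eigenvectorUnitary : Matrix (Fin d) (Fin d) ℂ) := by
  set U : Matrix (Fin d) (Fin d) ℂ := (hH.eigenvectorUnitary : Matrix (Fin d) (Fin d) ℂ) with hUdef
  have hUU : star U * U = 1 := by
    simpa [hUdef] using (Matrix.mem_unitaryGroup_iff').mp hH.eigenvectorUnitary.2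
  have hUU' : U * star U = 1 := by
    simpa [hUdef] using (Matrix.mem_unitaryGroup_iff).mp hH.eigenvectorUnitary.2
  have hUinv : U⁻¹ = star U := Matrix.inv_eq_left_inv hUU
  have hUunit : IsUnit U := ⟨⟨U, star U, hUU', hUU⟩, rfl⟩
  have hdiag : -((β : ℂ) • H)
      = U * diagonal (fun i => -((β : ℂ) * (hH.eigenvalues i : ℂ))) * star U := by
    conv_lhs => rw [hH.spectral_theorem]
    have h1 : (diagonal fun i => -((β : ℂ) * (hH.eigenvalues i : ℂ)))
        = -((β:ℂ) • diagonal (RCLike.ofReal ∘ hH.eigenvalues)) := by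
      rw [← Matrix.diagonal_smul, ← diagonal_neg]
      ext i j
      by_cases h : i = j <;> simp [Matrix.diagonal_apply, h]
    rw [h1]
    simp only [Matrix.mul_neg, Matrix.neg_mul, Matrix.mul_smul, Matrix.smul_mul, Unitary.conjStarAlgAut_apply, ← hUdef]
  rw [mexp, hdiag, ← hUinv, Matrix.exp_conj U _ hUunit, Matrix.exp_diagonal]
  have h2 : NormedSpace.exp (fun i => -((β:ℂ) * (hH.eigenvalues i : ℂ)))
      = fun i => (Real.exp (-(β * hH.eigenvalues i)) : ℂ) := by
    rw [Pi.exp_def]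
    funext i
    rw [← Complex.exp_eq_exp_ℂ, Complex.ofReal_exp, Complex.ofReal_neg, Complex.ofReal_mul]
  rw [h2]

/-- Theorem S3, success-probability part: with the paper's choice of `β`, `c₄`, `γ`,
the success probability of post-selection satisfies `tr(σ(β)) − 4γ ≥ c₄`. -/
theorem qal_constant_success_probability {d : ℕ} (c₁ c₂ c₃ : ℝ)
    (hc₁ : c₁ ∈ Set.Ioo (0 : ℝ) 1) (hc₂ : c₂ ∈ Set.Ioo (0 : ℝ) (1 / 10))
    (hc₃ : c₃ ∈ Set.Ioo (0 : ℝ) 1)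
    (H : Matrix (Fin d) (Fin d) ℂ)
    (hH : H.IsHermitian) (hH0 : H.PosSemidef) (hH1 : (1 - H).PosSemidef)
    (g : ℝ) (hg : IsLeast (Set.range hH.eigenvalues) g)
    (ε : ℝ) (hε : 0 < ε) (hgε : g ≤ c₁ * ε)
    (σ : Matrix (Fin d) (Fin d) ℂ) (hσ : σ.PosSemidef) (hσtr : σ.trace = 1)
    (hover : c₂ ≤ (spectralProj hH (g + ε) * σ).trace.re)
    (β c₄ γ : ℝ)
    (hβ : β = 3 * Real.log (1 + c₂) / (c₃ * ε))
    (hc₄ : c₄ = Real.exp (-(6 * (1 + c₁) * Real.log (1 + c₂) / c₃)) * c₂ / 2)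
    (hγ : γ = c₃ * c₄ / 40) :
    c₄ ≤ (mexp (-((β : ℂ) • H)) * σ * mexp (-((β : ℂ) • H))).trace.re - 4 * γ := by
  obtain ⟨hc₁0, hc₁1⟩ := hc₁
  obtain ⟨hc₂0, hc₂1⟩ := hc₂
  obtain ⟨hc₃0, hc₃1⟩ := hc₃
  set U : Matrix (Fin d) (Fin d) ℂ := (hH.eigenvectorUnitary : Matrix (Fin d) (Fin d) ℂ) with hUdef
  have hUU : star U * U = 1 := by
    simpa [hUdef] using (Matrix.mem_unitaryGroup_iff').mp hH.eigenvectorUnitary.2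
  set lam := hH.eigenvalues with hlam
  set M : Matrix (Fin d) (Fin d) ℂ := star U * σ * U with hM
  have hMpsd : M.PosSemidef := by
    have := hσ.conjTranspose_mul_mul_same U
    simpa [hM, Matrix.star_eq_conjTranspose] using this
  have hMre : ∀ i, 0 ≤ (M i i).re := fun i => qal_psd_diag_re_nonneg hMpsd i
  -- β positive
  have hL : 0 < Real.log (1 + c₂) := Real.log_pos (by linarith)
  have hβ0 : 0 < β := by rw [hβ]; positivity
  -- projector trace
  have hproj : (spectralProj hH (g + ε) * σ).trace
      = ∑ i, (if lam i ≤ g + ε then (1:ℂ) else 0) * M i i := by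
    exact qal_conj_trace U σ _
  -- exponential trace
  have hexp := qal_mexp_eq H hH β
  set f : Fin d → ℂ := fun i => (Real.exp (-(β * lam i)) : ℂ) with hf
  have hAA : mexp (-((β : ℂ) • H)) * mexp (-((β : ℂ) • H))
      = U * diagonal (fun i => f i * f i) * star U := by
    rw [hexp, ← hUdef]
    calc (U * diagonal f * star U) * (U * diagonal f * star U)
        = U * diagonal f * (star U * U) * diagonal f * star U := by
          simp only [mul_assoc]
      _ = U * (diagonal f * diagonal f) * star U := by rw [hUU]; simp only [mul_one, mul_assoc]
      _ = U * diagonal (fun i => f i * f i) * star U := by rw [diagonal_mul_diagonal]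
  have htr2 : (mexp (-((β : ℂ) • H)) * σ * mexp (-((β : ℂ) • H))).trace
      = ∑ i, (f i * f i) * M i i := by
    calc (mexp (-((β : ℂ) • H)) * σ * mexp (-((β : ℂ) • H))).trace
        = ((mexp (-((β : ℂ) • H)) * σ) * mexp (-((β : ℂ) • H))).trace := rfl
      _ = (mexp (-((β : ℂ) • H)) * (mexp (-((β : ℂ) • H)) * σ)).trace := trace_mul_comm _ _
      _ = ((mexp (-((β : ℂ) • H)) * mexp (-((β : ℂ) • H))) * σ).trace := by rw [← mul_assoc]
      _ = ((U * diagonal (fun i => f i * f i) * star U) * σ).trace := by rw [hAA]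
      _ = ∑ i, (f i * f i) * M i i := qal_conj_trace U σ _
  -- real parts
  have hre2 : (mexp (-((β : ℂ) • H)) * σ * mexp (-((β : ℂ) • H))).trace.re
      = ∑ i, Real.exp (-(β * lam i)) * Real.exp (-(β * lam i)) * (M i i).re := by
    rw [htr2, Complex.re_sum]
    refine Finset.sum_congr rfl fun i _ => ?_
    show ((Real.exp (-(β * lam i)) : ℂ) * (Real.exp (-(β * lam i)) : ℂ) * M i i).re = _
    rw [← Complex.ofReal_mul, Complex.re_ofReal_mul]
  have hre1 : (spectralProj hH (g + ε) * σ).trace.re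
      = ∑ i, (if lam i ≤ g + ε then (1:ℝ) else 0) * (M i i).re := by
    rw [hproj, Complex.re_sum]
    refine Finset.sum_congr rfl fun i _ => ?_
    by_cases h : lam i ≤ g + ε <;> simp [h]
  -- pointwise comparison
  set c : ℝ := Real.exp (-(2 * β * (g + ε))) with hc
  have hpoint : ∀ i, c * ((if lam i ≤ g + ε then (1:ℝ) else 0) * (M i i).re)
      ≤ Real.exp (-(β * lam i)) * Real.exp (-(β * lam i)) * (M i i).re := by
    intro i
    by_cases h : lam i ≤ g + ε
    · simp only [h, if_true, one_mul]
      have hee : Real.exp (-(β * lam i)) * Real.exp (-(β * lam i))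
          = Real.exp (-(2 * β * lam i)) := by
        rw [← Real.exp_add]; ring_nf
      rw [hee]
      apply mul_le_mul_of_nonneg_right _ (hMre i)
      exact Real.exp_le_exp.mpr (by nlinarith)
    · simp only [h, if_false, zero_mul, mul_zero]
      exact mul_nonneg (by positivity) (hMre i)
  -- chain of inequalities
  have hsum : c * (spectralProj hH (g + ε) * σ).trace.re
      ≤ (mexp (-((β : ℂ) • H)) * σ * mexp (-((β : ℂ) • H))).trace.re := by
    rw [hre1, hre2, Finset.mul_sum]
    exact Finset.sum_le_sum fun i _ => hpoint i
  have hc0 : 0 < c := Real.exp_pos _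
  have hcc₂ : c * c₂ ≤ c * (spectralProj hH (g + ε) * σ).trace.re :=
    mul_le_mul_of_nonneg_left hover hc0.le
  -- numeric bound: c ≥ exp(-(6(1+c₁)L/c₃)) = 2 c₄ / c₂
  have hcbound : Real.exp (-(6 * (1 + c₁) * Real.log (1 + c₂) / c₃)) ≤ c := by
    rw [hc]
    apply Real.exp_le_exp.mpr
    have hβval : β * ((1 + c₁) * ε) = 3 * (1 + c₁) * Real.log (1 + c₂) / c₃ := by
      rw [hβ]; field_simp
    have hge : g + ε ≤ (1 + c₁) * ε := by nlinarith
    have h1 : β * (g + ε) ≤ 3 * (1 + c₁) * Real.log (1 + c₂) / c₃ := by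
      rw [← hβval]; exact mul_le_mul_of_nonneg_left hge hβ0.le
    ring_nf
    ring_nf at h1
    linarith
  have hc₄0 : 0 < c₄ := by rw [hc₄]; positivity
  have h2c₄ : 2 * c₄ ≤ c * c₂ := by
    rw [hc₄]
    calc 2 * (Real.exp (-(6 * (1 + c₁) * Real.log (1 + c₂) / c₃)) * c₂ / 2)
        = Real.exp (-(6 * (1 + c₁) * Real.log (1 + c₂) / c₃)) * c₂ := by ring
      _ ≤ c * c₂ := mul_le_mul_of_nonneg_right hcbound hc₂0.le
  have hγle : 4 * γ ≤ c₄ := by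
    rw [hγ]
    nlinarith
  linarith
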